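/- arXiv:1409.2579 — 4 statements merged into one kernel-verified Lean document; each statement's English description precedes it below -/
import Mathlib

section
/- If x₁,…,xₙ ∈ ℝ^d (d ≥ n) are linearly independent and partitioned into c nonempty classes, then the within-class scatter matrix S_W has rank n − c. -/
open Matrix Finset

/-- The mean of class `j`. -/
noncomputable def classMean {d n c : ℕ} (x : Fin n → Fin d → ℝ) (g : Fin n → Fin c)
    (j : Fin c) : Fin d → ℝ :=
  (((Finset.univ.filter (fun i => g i = j)).card : ℝ))⁻¹ •
    ∑ i ∈ Finset.univ.filter (fun i => g i = j), x i

/-- The global mean of the training samples. -/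
noncomputable def globalMean {d n : ℕ} (x : Fin n → Fin d → ℝ) : Fin d → ℝ :=
  (n : ℝ)⁻¹ • ∑ i, x i

/-- The within-class scatter matrix. -/
noncomputable def withinScatter {d n c : ℕ} (x : Fin n → Fin d → ℝ) (g : Fin n → Fin c) :
    Matrix (Fin d) (Fin d) ℝ :=
  ∑ j, ∑ i ∈ Finset.univ.filter (fun i => g i = j),
    vecMulVec (x i - classMean x g j) (x i - classMean x g j)

/-- The between-class scatter matrix. -/
noncomputable def betweenScatter {d n c : ℕ} (x : Fin n → Fin d → ℝ) (g : Fin n → Fin c) :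
    Matrix (Fin d) (Fin d) ℝ :=
  ∑ j, (((Finset.univ.filter (fun i => g i = j)).card : ℝ)) •
    vecMulVec (classMean x g j - globalMean x) (classMean x g j - globalMean x)

/-- The total scatter matrix. -/
noncomputable def totalScatter {d n : ℕ} (x : Fin n → Fin d → ℝ) :
    Matrix (Fin d) (Fin d) ℝ :=
  ∑ i, vecMulVec (x i - globalMean x) (x i - globalMean x)


section Aux

open Finset Submodule

variable {n c : ℕ}

/-- The linear map summing coordinates over each class. -/
noncomputable def classSum (g : Fin n → Fin c) : (Fin n → ℝ) →ₗ[ℝ] (Fin c → ℝ) where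
  toFun v := fun j => ∑ i ∈ Finset.univ.filter (fun i => g i = j), v i
  map_add' u v := by funext j; simp [Finset.sum_add_distrib]
  map_smul' r v := by funext j; simp [Finset.mul_sum]

@[simp] lemma classSum_apply (g : Fin n → Fin c) (v : Fin n → ℝ) (j : Fin c) :
    classSum g v j = ∑ i ∈ Finset.univ.filter (fun i => g i = j), v i := rfl

end Aux

theorem stmt9 {d n c : ℕ} (hdn : n ≤ d) (x : Fin n → Fin d → ℝ) (g : Fin n → Fin c)
    (hli : LinearIndependent ℝ x)
    (hsurj : Function.Surjective g) :
    (withinScatter x g).rank = n - c := by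
  classical
  set nj : Fin c → ℕ := fun j => (Finset.univ.filter (fun i => g i = j)).card with hnjdef
  have hnj_pos : ∀ j, 0 < nj j := by
    intro j
    obtain ⟨i, hi⟩ := hsurj j
    exact Finset.card_pos.mpr ⟨i, by simp [hi]⟩
  have hnj_ne : ∀ j, (nj j : ℝ) ≠ 0 := fun j => Nat.cast_ne_zero.mpr (hnj_pos j).ne'
  set y : Fin n → Fin d → ℝ := fun i => x i - classMean x g (g i) with hy
  -- Step 1: rewrite the double sum as a single sum
  have hW : withinScatter x g = ∑ i, vecMulVec (y i) (y i) := by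
    rw [withinScatter,
      ← Finset.sum_fiberwise Finset.univ g (fun i => vecMulVec (y i) (y i))]
    refine Finset.sum_congr rfl fun j _ => Finset.sum_congr rfl fun i hi => ?_
    simp only [Finset.mem_filter] at hi
    rw [hy]
    simp [hi.2]
  -- Step 2: express as A * Aᵀ
  set A : Matrix (Fin d) (Fin n) ℝ := Matrix.of (fun a i => y i a) with hA
  have hAA : withinScatter x g = A * Aᵀ := by
    rw [hW]
    ext a b
    simp [Matrix.mul_apply, Matrix.vecMulVec_apply, hA, Matrix.sum_apply]
  rw [hAA, Matrix.rank_self_mul_transpose, Matrix.rank_eq_finrank_span_cols]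
  have hrange : Set.range A.col = Set.range y := by
    ext v
    constructor
    · rintro ⟨i, rfl⟩; exact ⟨i, rfl⟩
    · rintro ⟨i, rfl⟩; exact ⟨i, rfl⟩
  rw [hrange]
  -- Step 3: the injective linear map sending coordinates to combinations of x
  set φ : (Fin n → ℝ) →ₗ[ℝ] (Fin d → ℝ) := Fintype.linearCombination ℝ x with hφ
  have hφinj : Function.Injective φ := by
    rw [← LinearMap.ker_eq_bot, LinearMap.ker_eq_bot']
    intro v hv
    have h0 : ∑ i, v i • x i = 0 := by
      simpa [hφ, Fintype.linearCombination_apply] using hv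
    exact funext (Fintype.linearIndependent_iff.mp hli v h0)
  set z : Fin n → Fin n → ℝ := fun i k =>
    (if k = i then (1:ℝ) else 0) - ((nj (g i) : ℝ))⁻¹ * (if g k = g i then 1 else 0) with hz
  have hyz : ∀ i, y i = φ (z i) := by
    intro i
    rw [hφ, Fintype.linearCombination_apply]
    funext a
    simp only [hy, hz, Pi.sub_apply, Finset.sum_apply, Pi.smul_apply, smul_eq_mul,
      classMean, Pi.smul_apply]
    have hterm : ∀ k : Fin n,
        ((if k = i then (1:ℝ) else 0) - ((nj (g i) : ℝ))⁻¹ * (if g k = g i then 1 else 0))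
          * x k a
        = (if k = i then x k a else 0)
            - ((nj (g i) : ℝ))⁻¹ * (if g k = g i then x k a else 0) := by
      intro k
      by_cases h1 : k = i <;> by_cases h2 : g k = g i <;> simp [h1, h2] <;> ring
    rw [Finset.sum_congr rfl (fun k _ => hterm k), Finset.sum_sub_distrib,
      Finset.sum_ite_eq' Finset.univ i (fun k => x k a), if_pos (Finset.mem_univ i),
      ← Finset.mul_sum, ← Finset.sum_filter]
  -- Step 4: the class-sum map and its surjectivity
  set T := classSum g with hT
  have hTsurj : Function.Surjective T := by
    intro w
    refine ⟨fun i => ((nj (g i) : ℝ))⁻¹ * w (g i), ?_⟩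
    funext j
    rw [hT, classSum_apply]
    rw [Finset.sum_congr rfl (fun i hi => by
      simp only [Finset.mem_filter] at hi
      rw [hi.2])]
    rw [Finset.sum_const, nsmul_eq_mul]
    have hcc : ((Finset.univ.filter (fun i => g i = j)).card : ℝ) * ((nj j : ℝ))⁻¹ = 1 :=
      mul_inv_cancel₀ (hnj_ne j)
    rw [← mul_assoc, hcc, one_mul]
  -- Step 5: span of the z's equals the kernel of T
  have hspan : Submodule.span ℝ (Set.range z) = LinearMap.ker T := by
    apply le_antisymm
    · rw [Submodule.span_le]
      rintro _ ⟨i, rfl⟩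
      simp only [SetLike.mem_coe, LinearMap.mem_ker]
      refine funext fun j => ?_
      show (∑ k ∈ Finset.univ.filter (fun k => g k = j),
          ((if k = i then (1:ℝ) else 0)
            - ((nj (g i) : ℝ))⁻¹ * (if g k = g i then 1 else 0))) = 0
      rw [Finset.sum_sub_distrib,
        Finset.sum_ite_eq' (Finset.univ.filter (fun k => g k = j)) i (fun _ => (1:ℝ))]
      by_cases h : g i = j
      · subst h
        rw [if_pos (by simp)]
        rw [Finset.sum_congr rfl (fun k hk => by
          simp only [Finset.mem_filter] at hk
          rw [if_pos hk.2, mul_one])]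
        rw [Finset.sum_const, nsmul_eq_mul]
        have hcc : ((Finset.univ.filter (fun k => g k = g i)).card : ℝ)
            * ((nj (g i) : ℝ))⁻¹ = 1 := mul_inv_cancel₀ (hnj_ne (g i))
        rw [hcc, sub_self]
      · rw [if_neg (by simp [h])]
        rw [Finset.sum_congr rfl (fun k hk => by
          simp only [Finset.mem_filter] at hk
          rw [if_neg (fun hc : g k = g i => h (hc ▸ hk.2)), mul_zero])]
        simp
    · intro v hv
      have hv' : ∀ j, ∑ i ∈ Finset.univ.filter (fun i => g i = j), v i = 0 := by
        intro j
        have h0 := congrFun (LinearMap.mem_ker.mp hv) j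
        simpa [hT] using h0
      have hvz : v = ∑ i, v i • z i := by
        funext k
        rw [Finset.sum_apply]
        have hterm : ∀ i : Fin n, (v i • z i) k
            = (if i = k then v i else 0)
                - (if g i = g k then v i * ((nj (g k) : ℝ))⁻¹ else 0) := by
          intro i
          show v i * ((if k = i then (1:ℝ) else 0)
              - ((nj (g i) : ℝ))⁻¹ * (if g k = g i then 1 else 0)) = _
          by_cases h1 : k = i <;> by_cases h2 : g k = g i <;>
            simp [h1, h2, eq_comm] <;> ring
        rw [Finset.sum_congr rfl (fun i _ => hterm i), Finset.sum_sub_distrib,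
          Finset.sum_ite_eq' Finset.univ k v, if_pos (Finset.mem_univ k),
          ← Finset.sum_filter, ← Finset.sum_mul, hv' (g k), zero_mul, sub_zero]
      rw [hvz]
      exact Submodule.sum_mem _ fun i _ =>
        Submodule.smul_mem _ _ (Submodule.subset_span ⟨i, rfl⟩)
  -- Step 6: transport the span along φ
  have hyφz : Set.range y = φ '' Set.range z := by
    have hcomp : y = ⇑φ ∘ z := funext hyz
    rw [hcomp, Set.range_comp]
  have hfr : Module.finrank ℝ (Submodule.span ℝ (Set.range y))
      = Module.finrank ℝ (LinearMap.ker T) := by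
    rw [hyφz, Submodule.span_image, ← hspan]
    exact (Submodule.equivMapOfInjective φ hφinj _).finrank_eq.symm
  rw [hfr]
  -- Step 7: rank-nullity
  have hrn := LinearMap.finrank_range_add_finrank_ker T
  have hrtop : LinearMap.range T = ⊤ := LinearMap.range_eq_top.mpr hTsurj
  rw [hrtop] at hrn
  have h1 : Module.finrank ℝ (⊤ : Submodule ℝ (Fin c → ℝ)) = c := by
    rw [finrank_top]; simp [Module.finrank_pi]
  have h2 : Module.finrank ℝ (Fin n → ℝ) = n := by simp [Module.finrank_pi]
  rw [h1, h2] at hrn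
  omega
end

section
/- Let S_W, S_B be symmetric PSD matrices with S_T = S_W + S_B, and let W be a matrix such that S_T† S_B W = W and W has full column rank. Then S_W W = 0 and S_B W ≠ 0. -/
open Matrix

/-- The four Penrose conditions characterizing the Moore-Penrose pseudoinverse. -/
def IsMoorePenrose {d : ℕ} (A P : Matrix (Fin d) (Fin d) ℝ) : Prop :=
  A * P * A = A ∧ P * A * P = P ∧ (A * P)ᵀ = A * P ∧ (P * A)ᵀ = P * A

private lemma gram_diag_nonneg {d : ℕ} (M : Matrix (Fin d) (Fin d) ℝ) (i : Fin d) :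
    0 ≤ (Mᵀ * M) i i := by
  simp only [Matrix.mul_apply, Matrix.transpose_apply]
  exact Finset.sum_nonneg fun k _ => mul_self_nonneg _

private lemma gram_eq_zero {d : ℕ} (M : Matrix (Fin d) (Fin d) ℝ)
    (hM : ∀ i, (Mᵀ * M) i i = 0) : M = 0 := by
  ext k i
  have := hM i
  simp only [Matrix.mul_apply, Matrix.transpose_apply] at this
  have hz := (Finset.sum_eq_zero_iff_of_nonneg
    (fun j _ => mul_self_nonneg (M j i))).mp this k (Finset.mem_univ k)
  have : M k i = 0 := by nlinarith [hz]
  simpa using this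

theorem stmt11 {d h : ℕ} (hh : 1 ≤ h)
    (SW SB : Matrix (Fin d) (Fin d) ℝ)
    (hSW : SW.PosSemidef) (hSB : SB.PosSemidef)
    (P : Matrix (Fin d) (Fin d) ℝ) (hP : IsMoorePenrose (SW + SB) P)
    (W : Matrix (Fin d) (Fin h) ℝ)
    (hW : P * SB * W = W) (hrank : W.rank = h) :
    SW * W = 0 ∧ SB * W ≠ 0 := by
  obtain ⟨h1, h2, h3, h4⟩ := hP
  set A := SW + SB with hA
  set Q : Matrix (Fin d) (Fin d) ℝ := 1 - A * P with hQ
  have hQsymm : Qᵀ = Q := by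
    rw [hQ, Matrix.transpose_sub, Matrix.transpose_one, h3]
  have hQA : Q * A = 0 := by
    rw [hQ, Matrix.sub_mul, Matrix.one_mul, h1, sub_self]
  -- decompose SW, SB
  have hdecomp : ∀ M : Matrix (Fin d) (Fin d) ℝ, M.PosSemidef → ∃ B : Matrix (Fin d) (Fin d) ℝ, M = Bᴴ * B := by
    intro M hM
    open scoped MatrixOrder in
    obtain ⟨B, hB⟩ := CStarAlgebra.nonneg_iff_eq_star_mul_self.mp hM.nonneg
    exact ⟨B, hB⟩
  obtain ⟨B, hB⟩ := hdecomp SW hSW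
  obtain ⟨C, hC⟩ := hdecomp SB hSB
  rw [Matrix.conjTranspose_eq_transpose_of_trivial] at hB hC
  have hQAQ : Qᵀ * A * Q = 0 := by
    rw [hQsymm, hQA, Matrix.zero_mul]
  have hsum : (B * Q)ᵀ * (B * Q) + (C * Q)ᵀ * (C * Q) = 0 := by
    have : Qᵀ * (SW + SB) * Q = 0 := hQAQ
    rw [hB, hC] at this
    calc (B * Q)ᵀ * (B * Q) + (C * Q)ᵀ * (C * Q)
        = Qᵀ * (Bᵀ * B + Cᵀ * C) * Q := by
          simp [Matrix.transpose_mul, Matrix.mul_add, Matrix.add_mul, Matrix.mul_assoc]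
      _ = 0 := this
  have hBQ : B * Q = 0 := by
    apply gram_eq_zero
    intro i
    have h5 : ((B * Q)ᵀ * (B * Q)) i i + ((C * Q)ᵀ * (C * Q)) i i = 0 := by
      have := congrFun (congrFun hsum i) i
      simpa using this
    have := gram_diag_nonneg (B * Q) i
    have := gram_diag_nonneg (C * Q) i
    linarith
  have hCQ : C * Q = 0 := by
    apply gram_eq_zero
    intro i
    have h5 : ((B * Q)ᵀ * (B * Q)) i i + ((C * Q)ᵀ * (C * Q)) i i = 0 := by
      have := congrFun (congrFun hsum i) i
      simpa using this
    have := gram_diag_nonneg (B * Q) i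
    have := gram_diag_nonneg (C * Q) i
    linarith
  have hSBQ : SB * Q = 0 := by
    rw [hC, Matrix.mul_assoc, hCQ, Matrix.mul_zero]
  -- SB = SB * A * P, transpose to get A * P * SB = SB
  have hSB2 : SB - SB * (A * P) = 0 := by
    have : SB * Q = SB * 1 - SB * (A * P) := by rw [hQ, Matrix.mul_sub]
    rw [this, Matrix.mul_one] at hSBQ
    exact hSBQ
  have hSBt : SBᵀ = SB := by
    have := hSB.isHermitian
    rw [Matrix.IsHermitian] at this
    simpa using this
  have hAPSB : A * P * SB = SB := by
    have h6 : SB = SB * (A * P) := sub_eq_zero.mp hSB2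
    have h7 := congrArg Matrix.transpose h6
    rw [Matrix.transpose_mul, h3, hSBt] at h7
    exact h7.symm
  have hAW : A * W = SB * W := by
    calc A * W = A * (P * SB * W) := by rw [hW]
      _ = (A * P * SB) * W := by rw [Matrix.mul_assoc, Matrix.mul_assoc, Matrix.mul_assoc]
      _ = SB * W := by rw [hAPSB]
  have hSWW : SW * W = 0 := by
    have : SW * W + SB * W = SB * W := by
      rw [← Matrix.add_mul]; exact hAW
    rwa [add_eq_right] at this
  refine ⟨hSWW, ?_⟩
  intro hzero
  have hW0 : W = 0 := by
    rw [← hW, Matrix.mul_assoc, hzero, Matrix.mul_zero]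
  rw [hW0, Matrix.rank_zero] at hrank
  omega
end

section
/- Let S_W, S_B be symmetric PSD matrices with S_T = S_W + S_B and let W satisfy S_T† S_B W = W. Then every column w of W lies in the null space of S_W, i.e., S_W W = 0. -/
open Matrix

lemma psd_add_eq_zero {d : ℕ} {X Y : Matrix (Fin d) (Fin d) ℝ}
    (hX : X.PosSemidef) (hY : Y.PosSemidef) (h : X + Y = 0) : X = 0 := by
  have hv : ∀ v : Fin d → ℝ, X *ᵥ v = 0 := by
    intro v
    have h1 : (0:ℝ) ≤ star v ⬝ᵥ X *ᵥ v := hX.dotProduct_mulVec_nonneg v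
    have h2 : (0:ℝ) ≤ star v ⬝ᵥ Y *ᵥ v := hY.dotProduct_mulVec_nonneg v
    have hsum : star v ⬝ᵥ X *ᵥ v + star v ⬝ᵥ Y *ᵥ v = 0 := by
      rw [← dotProduct_add, ← add_mulVec, h, zero_mulVec, dotProduct_zero]
    have hx0 : star v ⬝ᵥ X *ᵥ v = 0 := by linarith
    exact (hX.dotProduct_mulVec_zero_iff v).mp hx0
  ext i j
  have := congrFun (hv (Pi.single j 1)) i
  simpa [mulVec, dotProduct, Pi.single_apply] using this

theorem stmt12 {d h : ℕ}
    (SW SB : Matrix (Fin d) (Fin d) ℝ)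
    (hSW : SW.PosSemidef) (hSB : SB.PosSemidef)
    (P : Matrix (Fin d) (Fin d) ℝ) (hP : IsMoorePenrose (SW + SB) P)
    (W : Matrix (Fin d) (Fin h) ℝ)
    (hW : P * SB * W = W) :
    SW * W = 0 := by
  set T := SW + SB with hT
  obtain ⟨h1, h2, h3, h4⟩ := hP
  set R := (1 : Matrix (Fin d) (Fin d) ℝ) - T * P with hR
  have hRT : R * T = 0 := by
    rw [hR, sub_mul, one_mul, h1, sub_self]
  have hRTR : R * SW * Rᵀ + R * SB * Rᵀ = 0 := by
    have : R * T * Rᵀ = 0 := by rw [hRT, zero_mul]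
    calc R * SW * Rᵀ + R * SB * Rᵀ = R * T * Rᵀ := by
          rw [hT, mul_add, add_mul]
      _ = 0 := this
  have hRSBR : R * SB * Rᵀ = 0 := by
    have pW : (R * SW * Rᵀ).PosSemidef := by
      simpa [conjTranspose_eq_transpose_of_trivial] using
        hSW.mul_mul_conjTranspose_same R
    have pB : (R * SB * Rᵀ).PosSemidef := by
      simpa [conjTranspose_eq_transpose_of_trivial] using
        hSB.mul_mul_conjTranspose_same R
    have := psd_add_eq_zero pW pB hRTR
    rw [add_comm] at hRTR
    exact psd_add_eq_zero pB pW hRTR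
  -- SB = Cᴴ C
  obtain ⟨C, hC⟩ : ∃ C : Matrix (Fin d) (Fin d) ℝ, SB = Cᴴ * C := by
    open scoped MatrixOrder in
    exact CStarAlgebra.nonneg_iff_eq_star_mul_self.mp hSB.nonneg
  have hSBsym : SBᵀ = SB := by
    rw [← conjTranspose_eq_transpose_of_trivial, hSB.isHermitian.eq]
  have hCR : C * Rᵀ = 0 := by
    have key : (C * Rᵀ)ᴴ * (C * Rᵀ) = 0 := by
      rw [conjTranspose_mul, conjTranspose_eq_transpose_of_trivial Rᵀ,
        transpose_transpose, ← mul_assoc, mul_assoc R, ← hC, hRSBR]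
    exact conjTranspose_mul_self_eq_zero.mp key
  have hRSB : R * SB = 0 := by
    have hSBRT : SB * Rᵀ = 0 := by
      rw [hC, conjTranspose_eq_transpose_of_trivial, mul_assoc, hCR, mul_zero]
    have := congrArg transpose hSBRT
    simpa [transpose_mul, transpose_transpose, hSBsym] using this
  -- T * P * SB = SB
  have hTPSB : T * P * SB = SB := by
    have : (1 - T * P) * SB = 0 := hRSB
    rw [sub_mul, one_mul, sub_eq_zero] at this
    exact this.symm
  have hTW : T * W = SB * W := by
    calc T * W = T * (P * SB * W) := by rw [hW]
      _ = (T * P * SB) * W := by rw [← Matrix.mul_assoc, ← Matrix.mul_assoc]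
      _ = SB * W := by rw [hTPSB]
  have hTW' : T * W = SW * W + SB * W := by rw [hT, Matrix.add_mul]
  rw [hTW] at hTW'
  exact (add_right_cancel (a := SW * W) (b := SB * W) (c := 0) (by
    rw [zero_add]; exact hTW'.symm)).symm ▸ rfl
end

section
/- Let Q = Σ₁⁻¹ U₁ᵀ B where S_T, S_B = BBᵀ are the total and between-class scatter matrices of n linearly independent training vectors in c classes, S_T = U₁ Σ₁² U₁ᵀ with U₁ᵀU₁ = I and Σ₁ positive diagonal. Then the eigenvalues of Q Qᵀ ∈ ℝ^{(n−1)×(n−1)} are 1 with multiplicity c−1 and 0 with multiplicity n−c; i.e., QQᵀ is an orthogonal projection of rank c−1. -/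
open Matrix Finset

private lemma mul_vecMulVec' {m n p : Type*} [Fintype n] (A : Matrix m n ℝ) (u : n → ℝ)
    (v : p → ℝ) : A * vecMulVec u v = vecMulVec (A *ᵥ u) v := by
  ext i j
  simp [mul_apply, vecMulVec_apply, mulVec, dotProduct, Finset.sum_mul, mul_assoc]

private lemma vecMulVec_mul' {m n p : Type*} [Fintype n] (u : m → ℝ) (v : n → ℝ)
    (A : Matrix n p ℝ) : vecMulVec u v * A = vecMulVec u (v ᵥ* A) := by
  ext i j
  simp [mul_apply, vecMulVec_apply, vecMul, dotProduct, Finset.mul_sum, mul_assoc]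

private lemma vecMulVec_mulVec' {m n : Type*} [Fintype n] (u : m → ℝ) (v y : n → ℝ) :
    vecMulVec u v *ᵥ y = (v ⬝ᵥ y) • u := by
  ext i
  simp [vecMulVec_apply, mulVec, dotProduct, Finset.sum_mul, Finset.mul_sum, mul_assoc,
    mul_comm, mul_left_comm]

private lemma rank_aux {c : ℕ} (w : Fin c → ℝ) (hw : w ≠ 0) :
    ((1 : Matrix (Fin c) (Fin c) ℝ) - (w ⬝ᵥ w)⁻¹ • vecMulVec w w).rank = c - 1 := by
  have h0 : w ⬝ᵥ w ≠ 0 := by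
    intro h
    apply hw
    have := (Fintype.sum_eq_zero_iff_of_nonneg (f := fun j => w j * w j)
      (fun j => mul_self_nonneg _)).mp h
    funext j
    exact mul_self_eq_zero.mp (congrFun this j)
  set R : Matrix (Fin c) (Fin c) ℝ := 1 - (w ⬝ᵥ w)⁻¹ • vecMulVec w w with hR
  have hmv : ∀ v, R *ᵥ v = v - ((w ⬝ᵥ w)⁻¹ * (w ⬝ᵥ v)) • w := by
    intro v
    rw [hR, Matrix.sub_mulVec, Matrix.one_mulVec, Matrix.smul_mulVec,
      vecMulVec_mulVec', smul_smul]
  have hker : LinearMap.ker R.mulVecLin = ℝ ∙ w := by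
    ext v
    simp only [LinearMap.mem_ker, Matrix.mulVecLin_apply, Submodule.mem_span_singleton]
    constructor
    · intro h
      refine ⟨(w ⬝ᵥ w)⁻¹ * (w ⬝ᵥ v), ?_⟩
      have := hmv v
      rw [h] at this
      exact (sub_eq_zero.mp this.symm).symm
    · rintro ⟨a, rfl⟩
      rw [hmv, dotProduct_smul]
      rw [smul_eq_mul, ← mul_assoc, mul_comm ((w ⬝ᵥ w)⁻¹), mul_assoc,
        inv_mul_cancel₀ h0, mul_one]
      simp
  have hrn := LinearMap.finrank_range_add_finrank_ker R.mulVecLin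
  rw [hker, finrank_span_singleton hw, Module.finrank_fintype_fun_eq_card,
    Fintype.card_fin] at hrn
  have : R.rank = Module.finrank ℝ (LinearMap.range R.mulVecLin) := rfl
  omega

private lemma proj_absorb {d n : Type*} [Fintype d] [Fintype n] (P : Matrix d d ℝ)
    (H : Matrix d n ℝ) (hPt : Pᵀ = P) (hPS : P * (H * Hᵀ) = H * Hᵀ) : P * H = H := by
  have hSP : H * Hᵀ * P = H * Hᵀ := by
    have := congrArg Matrix.transpose hPS
    rwa [Matrix.transpose_mul, Matrix.transpose_mul, Matrix.transpose_transpose, hPt] at this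
  have hNN : (H - P * H) * (H - P * H)ᵀ = 0 := by
    rw [Matrix.transpose_sub, Matrix.transpose_mul, hPt, Matrix.sub_mul, Matrix.mul_sub,
      Matrix.mul_sub]
    simp only [← Matrix.mul_assoc]
    rw [Matrix.mul_assoc P H Hᵀ, hPS, hSP]
    abel
  have h0 : H - P * H = 0 := by
    have hconj : (H - P * H) * (H - P * H)ᴴ = 0 := by
      have : (H - P * H)ᴴ = (H - P * H)ᵀ := by
        ext i j
        simp [Matrix.conjTranspose_apply, Matrix.transpose_apply]
      rw [this, hNN]
    exact Matrix.self_mul_conjTranspose_eq_zero.mp hconj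
  exact (sub_eq_zero.mp h0).symm

theorem stmt14 {d n c : ℕ} (hdn : n ≤ d) (x : Fin n → Fin d → ℝ) (g : Fin n → Fin c)
    (hli : LinearIndependent ℝ x)
    (hsurj : Function.Surjective g)
    (B : Matrix (Fin d) (Fin c) ℝ)
    (hB : B = Matrix.of fun i j =>
      Real.sqrt ((Finset.univ.filter (fun i' => g i' = j)).card) *
        (classMean x g j i - globalMean x i))
    (U₁ : Matrix (Fin d) (Fin (n - 1)) ℝ)
    (σ : Fin (n - 1) → ℝ) (hσ : ∀ i, 0 < σ i)
    (hU₁ : U₁ᵀ * U₁ = 1)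
    (hST : totalScatter x = U₁ * Matrix.diagonal (fun i => (σ i) ^ 2) * U₁ᵀ)
    (Q : Matrix (Fin (n - 1)) (Fin c) ℝ)
    (hQ : Q = (Matrix.diagonal σ)⁻¹ * U₁ᵀ * B) :
    (Q * Qᵀ) * (Q * Qᵀ) = Q * Qᵀ ∧ (Q * Qᵀ)ᵀ = Q * Qᵀ ∧ (Q * Qᵀ).rank = c - 1 := by
  classical
  rcases Nat.eq_zero_or_pos n with hn | hn
  · -- degenerate case `n = 0`
    subst hn
    have hc : c = 0 := by
      by_contra hcne
      obtain ⟨i, -⟩ := hsurj ⟨0, Nat.pos_of_ne_zero hcne⟩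
      exact i.elim0
    subst hc
    have hempty : ∀ A B' : Matrix (Fin (0 - 1)) (Fin (0 - 1)) ℝ, A = B' := by
      intro A B'
      ext i
      exact i.elim0
    refine ⟨hempty _ _, hempty _ _, ?_⟩
    have h1 := Matrix.rank_le_card_width (Q * Qᵀ)
    rw [Fintype.card_fin] at h1
    omega
  -- main case `0 < n`
  have hc : 0 < c := Nat.pos_of_ne_zero (fun h => by subst h; exact (g ⟨0, hn⟩).elim0)
  have hn' : (n : ℝ) ≠ 0 := Nat.cast_ne_zero.mpr hn.ne'
  set μ : Fin d → ℝ := globalMean x with hμ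
  set nj : Fin c → ℕ := fun j => (univ.filter (fun i => g i = j)).card with hnjdef
  have hnjpos : ∀ j, 0 < nj j := by
    intro j
    obtain ⟨i, hi⟩ := hsurj j
    exact Finset.card_pos.mpr ⟨i, by simp [hi]⟩
  have hnj' : ∀ j, (nj j : ℝ) ≠ 0 := fun j => Nat.cast_ne_zero.mpr (hnjpos j).ne'
  have hnjsum : ∑ j, (nj j : ℝ) = (n : ℝ) := by
    have h := Finset.card_eq_sum_card_fiberwise
      (f := g) (s := (univ : Finset (Fin n))) (t := (univ : Finset (Fin c)))
      (fun i _ => mem_univ _)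
    rw [Finset.card_univ, Fintype.card_fin] at h
    exact_mod_cast congrArg (Nat.cast (R := ℝ)) h.symm
  set w : Fin c → ℝ := fun j => Real.sqrt (nj j) with hwdef
  have hwpos : ∀ j, 0 < w j := fun j => Real.sqrt_pos.mpr (by exact_mod_cast hnjpos j)
  have hw' : ∀ j, w j ≠ 0 := fun j => (hwpos j).ne'
  have hww : ∀ j, w j * w j = (nj j : ℝ) := fun j => Real.mul_self_sqrt (Nat.cast_nonneg _)
  set H : Matrix (Fin d) (Fin n) ℝ := Matrix.of (fun i k => x k i - μ i) with hHdef
  set E : Matrix (Fin n) (Fin c) ℝ :=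
    Matrix.of (fun k j => if g k = j then (w j)⁻¹ else 0) with hEdef
  set onev : Fin n → ℝ := fun _ => 1 with honedef
  -- B = H * E
  have hB' : B = H * E := by
    rw [hB]
    ext i j
    rw [Matrix.mul_apply]
    have h1 : ∀ k : Fin n, H i k * E k j = if g k = j then (x k i - μ i) * (w j)⁻¹ else 0 := by
      intro k
      by_cases h : g k = j <;> simp [hHdef, hEdef, h]
    rw [Finset.sum_congr rfl (fun k _ => h1 k), ← Finset.sum_filter, ← Finset.sum_mul]
    have h3 : classMean x g j i
        = (nj j : ℝ)⁻¹ * ∑ k ∈ univ.filter (fun k => g k = j), x k i := by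
      simp [classMean, Finset.sum_apply, hnjdef]
    have h2 : ∑ k ∈ univ.filter (fun k => g k = j), (x k i - μ i)
        = (nj j : ℝ) * (classMean x g j i - μ i) := by
      rw [Finset.sum_sub_distrib, Finset.sum_const, nsmul_eq_mul, h3, mul_sub, ← mul_assoc,
        mul_inv_cancel₀ (hnj' j), one_mul]
    rw [h2]
    show Real.sqrt (nj j) * (classMean x g j i - μ i) = _
    have h4 : w j * w j * (w j)⁻¹ = w j := by field_simp
    rw [show (Real.sqrt (nj j) : ℝ) = w j from rfl, ← hww j,
      mul_right_comm (w j * w j) (classMean x g j i - μ i) ((w j)⁻¹), h4]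
  -- H annihilates the all-ones vector
  have hH1 : H *ᵥ onev = 0 := by
    funext i
    have hμi : μ i = (n : ℝ)⁻¹ * ∑ k, x k i := by
      simp [hμ, globalMean, Finset.sum_apply]
    simp only [Matrix.mulVec, dotProduct, hHdef, Matrix.of_apply, honedef, mul_one,
      Pi.zero_apply, Finset.sum_sub_distrib, Finset.sum_const, Finset.card_univ,
      Fintype.card_fin, nsmul_eq_mul]
    rw [hμi, ← mul_assoc, mul_inv_cancel₀ hn', one_mul, sub_self]
  -- total scatter is H * Hᵀ
  have hTS : H * Hᵀ = U₁ * Matrix.diagonal (fun i => σ i ^ 2) * U₁ᵀ := by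
    rw [← hST]
    ext a b
    rw [Matrix.mul_apply, totalScatter]
    simp [Matrix.sum_apply, vecMulVec_apply, Matrix.transpose_apply, hHdef, hμ]
  -- kernel of H consists of constant vectors
  have hker : ∀ v : Fin n → ℝ, H *ᵥ v = 0 → ∃ α : ℝ, v = fun _ => α := by
    intro v hv
    have hμs : ∀ i, μ i = (n : ℝ)⁻¹ * ∑ k, x k i := by
      intro i
      simp [hμ, globalMean, Finset.sum_apply]
    have hvs : ∀ i, ∑ k, v k * x k i = (∑ k, v k) * μ i := by
      intro i
      have h0 := congrFun hv i
      simp only [Matrix.mulVec, dotProduct, hHdef, Matrix.of_apply, Pi.zero_apply] at h0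
      have h1 : ∑ k, (x k i - μ i) * v k = ∑ k, v k * x k i - (∑ k, v k) * μ i := by
        rw [Finset.sum_mul]
        rw [← Finset.sum_sub_distrib]
        exact Finset.sum_congr rfl (fun k _ => by ring)
      rw [h1] at h0
      linarith
    have key := Fintype.linearIndependent_iff.mp hli (fun k => v k - (∑ l, v l) / n) ?_
    · refine ⟨(∑ l, v l) / n, funext fun k => ?_⟩
      have := key k
      linarith
    · funext i
      simp only [Pi.smul_apply, smul_eq_mul, Finset.sum_apply, Pi.zero_apply]
      have h2 : ∑ k, (v k - (∑ l, v l) / n) * x k i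
          = ∑ k, v k * x k i - (∑ l, v l) / n * ∑ k, x k i := by
        rw [Finset.mul_sum, ← Finset.sum_sub_distrib]
        exact Finset.sum_congr rfl (fun k _ => by ring)
      rw [h2, hvs i, hμs i]
      field_simp
      ring
  -- the projection P = U₁U₁ᵀ fixes H
  have hPt : (U₁ * U₁ᵀ)ᵀ = U₁ * U₁ᵀ := by
    rw [Matrix.transpose_mul, Matrix.transpose_transpose]
  have hPH : (U₁ * U₁ᵀ) * H = H := by
    apply proj_absorb _ _ hPt
    rw [hTS]
    calc U₁ * U₁ᵀ * (U₁ * Matrix.diagonal (fun i => σ i ^ 2) * U₁ᵀ)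
        = U₁ * ((U₁ᵀ * U₁) * (Matrix.diagonal (fun i => σ i ^ 2) * U₁ᵀ)) := by
          simp only [Matrix.mul_assoc]
      _ = U₁ * Matrix.diagonal (fun i => σ i ^ 2) * U₁ᵀ := by
          rw [hU₁, Matrix.one_mul, Matrix.mul_assoc]
  -- the pseudo-inverse matrix M
  have hMS : U₁ * (Matrix.diagonal (fun i => (σ i ^ 2)⁻¹) * (U₁ᵀ * (H * Hᵀ)))
      = U₁ * U₁ᵀ := by
    rw [hTS, Matrix.mul_assoc U₁ (Matrix.diagonal fun i => σ i ^ 2) U₁ᵀ,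
      ← Matrix.mul_assoc U₁ᵀ U₁ _, hU₁, Matrix.one_mul,
      ← Matrix.mul_assoc (Matrix.diagonal fun i => (σ i ^ 2)⁻¹) (Matrix.diagonal fun i => σ i ^ 2) U₁ᵀ,
      Matrix.diagonal_mul_diagonal]
    have h5 : (fun i => (σ i ^ 2)⁻¹ * σ i ^ 2) = fun _ => (1 : ℝ) :=
      funext fun i => inv_mul_cancel₀ (pow_ne_zero 2 (hσ i).ne')
    rw [h5, Matrix.diagonal_one, Matrix.one_mul]
  -- the key projection identity
  have hA : Hᵀ * (U₁ * (Matrix.diagonal (fun i => (σ i ^ 2)⁻¹) * (U₁ᵀ * H)))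
      = 1 - (n : ℝ)⁻¹ • vecMulVec onev onev := by
    set A : Matrix (Fin n) (Fin n) ℝ
      := Hᵀ * (U₁ * (Matrix.diagonal (fun i => (σ i ^ 2)⁻¹) * (U₁ᵀ * H))) with hAdef
    have hAH : A * Hᵀ = Hᵀ := by
      have h1 : A * Hᵀ
          = Hᵀ * (U₁ * (Matrix.diagonal (fun i => (σ i ^ 2)⁻¹) * (U₁ᵀ * (H * Hᵀ)))) := by
        rw [hAdef]; simp only [Matrix.mul_assoc]
      rw [h1, hMS]
      have h2 := congrArg Matrix.transpose hPH
      rwa [Matrix.transpose_mul, hPt] at h2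
    have hAt : Aᵀ = A := by
      rw [hAdef]
      simp only [Matrix.transpose_mul, Matrix.transpose_transpose, Matrix.diagonal_transpose,
        Matrix.mul_assoc]
    have hA1 : A *ᵥ onev = 0 := by
      rw [hAdef]
      simp only [← Matrix.mulVec_mulVec]
      rw [hH1]
      simp only [Matrix.mulVec_zero]
    have honet : (vecMulVec onev onev)ᵀ = vecMulVec onev onev := by
      ext i j; simp [vecMulVec_apply, Matrix.transpose_apply, honedef]
    set D := A - (1 - (n : ℝ)⁻¹ • vecMulVec onev onev) with hDdef
    have hDt : Dᵀ = D := by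
      rw [hDdef, Matrix.transpose_sub, hAt, Matrix.transpose_sub, Matrix.transpose_one,
        Matrix.transpose_smul, honet]
    have hDH : D * Hᵀ = 0 := by
      rw [hDdef, Matrix.sub_mul, hAH, Matrix.sub_mul, Matrix.one_mul, Matrix.smul_mul,
        vecMulVec_mul', Matrix.vecMul_transpose, hH1]
      have hz : vecMulVec onev (0 : Fin d → ℝ) = 0 := by
        ext i j; simp [vecMulVec_apply]
      rw [hz, smul_zero, sub_zero, sub_self]
    have hHD : H * D = 0 := by
      have h2 := congrArg Matrix.transpose hDH
      rwa [Matrix.transpose_mul, Matrix.transpose_transpose, hDt, Matrix.transpose_zero] at h2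
    have hD1 : D *ᵥ onev = 0 := by
      rw [hDdef, Matrix.sub_mulVec, hA1, Matrix.sub_mulVec, Matrix.one_mulVec,
        Matrix.smul_mulVec, vecMulVec_mulVec']
      have hdot : onev ⬝ᵥ onev = (n : ℝ) := by
        simp [dotProduct, honedef]
      rw [hdot, smul_smul, inv_mul_cancel₀ hn', one_smul]
      simp
    have hD0 : D = 0 := by
      have hcolv : ∀ j, H *ᵥ (fun l => D l j) = 0 := by
        intro j
        funext i
        have h4 := congrFun (congrFun hHD i) j
        simpa [Matrix.mul_apply, Matrix.mulVec, dotProduct] using h4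
      ext k j
      obtain ⟨α, hα⟩ := hker (fun l => D l j) (hcolv j)
      have hDsym : ∀ l, D l j = D j l := fun l => congrFun (congrFun hDt j) l
      have hrow : ∑ l, D j l = 0 := by
        have h3 := congrFun hD1 j
        simpa [Matrix.mulVec, dotProduct, honedef] using h3
      have hcolsum : ∑ l, D l j = 0 := by
        rw [Finset.sum_congr rfl (fun l _ => hDsym l)]; exact hrow
      have hconst : ∑ l, D l j = (n : ℝ) * α := by
        rw [Finset.sum_congr rfl (fun l _ => congrFun hα l)]
        simp [Finset.sum_const, mul_comm]
      have hα0 : α = 0 := by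
        have h6 : (n : ℝ) * α = 0 := hconst.symm.trans hcolsum
        exact (mul_eq_zero.mp h6).resolve_left hn'
      show D k j = (0 : Matrix (Fin n) (Fin n) ℝ) k j
      simp [congrFun hα k, hα0]
    have h7 : A - (1 - (n : ℝ)⁻¹ • vecMulVec onev onev) = 0 := by rw [← hDdef]; exact hD0
    exact sub_eq_zero.mp h7
  -- computation of Qᵀ * Q
  have hdiaginv : (Matrix.diagonal σ)⁻¹ = Matrix.diagonal (fun i => (σ i)⁻¹) := by
    apply Matrix.inv_eq_right_inv
    rw [Matrix.diagonal_mul_diagonal]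
    have h8 : (fun i => σ i * (σ i)⁻¹) = fun _ => (1 : ℝ) :=
      funext fun i => mul_inv_cancel₀ (hσ i).ne'
    rw [h8, Matrix.diagonal_one]
  have honeE : onev ᵥ* E = w := by
    funext j
    show ∑ k, onev k * E k j = w j
    have h9 : ∀ k : Fin n, onev k * E k j = if g k = j then (w j)⁻¹ else 0 := by
      intro k
      by_cases h : g k = j <;> simp [hEdef, honedef, h]
    rw [Finset.sum_congr rfl (fun k _ => h9 k), ← Finset.sum_filter, Finset.sum_const,
      nsmul_eq_mul]
    rw [show ((univ.filter fun k => g k = j).card : ℝ) = ((nj j : ℕ) : ℝ) from rfl, ← hww j]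
    exact mul_inv_cancel_right₀ (hw' j) (w j)
  have hEone : Eᵀ *ᵥ onev = w := by
    funext j
    show ∑ k, Eᵀ j k * onev k = w j
    have h9 : ∀ k : Fin n, Eᵀ j k * onev k = if g k = j then (w j)⁻¹ else 0 := by
      intro k
      by_cases h : g k = j <;> simp [hEdef, honedef, h, Matrix.transpose_apply]
    rw [Finset.sum_congr rfl (fun k _ => h9 k), ← Finset.sum_filter, Finset.sum_const,
      nsmul_eq_mul]
    rw [show ((univ.filter fun k => g k = j).card : ℝ) = ((nj j : ℕ) : ℝ) from rfl, ← hww j]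
    exact mul_inv_cancel_right₀ (hw' j) (w j)
  have hEE : Eᵀ * E = 1 := by
    ext j l
    rw [Matrix.mul_apply]
    by_cases hjl : j = l
    · subst hjl
      have h10 : ∀ k : Fin n, Eᵀ j k * E k j = if g k = j then (w j)⁻¹ * (w j)⁻¹ else 0 := by
        intro k
        by_cases h : g k = j <;> simp [hEdef, h]
      rw [Finset.sum_congr rfl (fun k _ => h10 k), ← Finset.sum_filter, Finset.sum_const,
        nsmul_eq_mul, Matrix.one_apply_eq]
      rw [show ((univ.filter fun k => g k = j).card : ℝ) = ((nj j : ℕ) : ℝ) from rfl, ← hww j,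
        mul_mul_mul_comm, mul_inv_cancel₀ (hw' j), one_mul]
    · have h11 : ∀ k : Fin n, Eᵀ j k * E k l = 0 := by
        intro k
        rcases eq_or_ne (g k) j with h1 | h1
        · rcases eq_or_ne (g k) l with h2 | h2
          · exact absurd (h1.symm.trans h2) hjl
          · simp [hEdef, h1, h2, hjl]
        · simp [hEdef, h1]
      rw [Finset.sum_congr rfl (fun k _ => h11 k), Finset.sum_const_zero,
        Matrix.one_apply_ne hjl]
  have hQtQ : Qᵀ * Q = 1 - (n : ℝ)⁻¹ • vecMulVec w w := by
    rw [hQ, hB', hdiaginv]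
    simp only [Matrix.transpose_mul, Matrix.transpose_transpose, Matrix.diagonal_transpose,
      Matrix.mul_assoc]
    have hdd : (Matrix.diagonal fun i => (σ i)⁻¹)
        * ((Matrix.diagonal fun i => (σ i)⁻¹) * (U₁ᵀ * (H * E)))
        = (Matrix.diagonal fun i => (σ i ^ 2)⁻¹) * (U₁ᵀ * (H * E)) := by
      rw [← Matrix.mul_assoc, Matrix.diagonal_mul_diagonal]
      congr 1
      exact congrArg _ (funext fun i => by rw [pow_two, mul_inv])
    rw [hdd]
    have hAE : Hᵀ * (U₁ * ((Matrix.diagonal fun i => (σ i ^ 2)⁻¹) * (U₁ᵀ * (H * E))))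
        = (1 - (n : ℝ)⁻¹ • vecMulVec onev onev) * E := by
      have h12 : Hᵀ * (U₁ * ((Matrix.diagonal fun i => (σ i ^ 2)⁻¹) * (U₁ᵀ * (H * E))))
          = (Hᵀ * (U₁ * ((Matrix.diagonal fun i => (σ i ^ 2)⁻¹) * (U₁ᵀ * H)))) * E := by
        simp only [Matrix.mul_assoc]
      rw [h12, hA]
    rw [hAE, Matrix.sub_mul, Matrix.one_mul, Matrix.smul_mul, vecMulVec_mul', honeE,
      Matrix.mul_sub, Matrix.mul_smul, mul_vecMulVec', hEone, hEE]
  -- Q annihilates w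
  have hEw : E *ᵥ w = onev := by
    funext k
    show ∑ j, E k j * w j = onev k
    have h13 : ∀ j, E k j * w j = if g k = j then (w j)⁻¹ * w j else 0 := by
      intro j
      by_cases h : g k = j <;> simp [hEdef, h]
    rw [Finset.sum_congr rfl (fun j _ => h13 j), Finset.sum_ite_eq, if_pos (mem_univ _),
      inv_mul_cancel₀ (hw' _)]
  have hQw : Q *ᵥ w = 0 := by
    rw [hQ, hB']
    simp only [← Matrix.mulVec_mulVec]
    rw [hEw, hH1]
    simp only [Matrix.mulVec_zero]
  refine ⟨?_, ?_, ?_⟩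
  · calc Q * Qᵀ * (Q * Qᵀ) = Q * ((Qᵀ * Q) * Qᵀ) := by simp only [Matrix.mul_assoc]
      _ = Q * Qᵀ := by
        rw [hQtQ, Matrix.sub_mul, Matrix.one_mul, Matrix.smul_mul, Matrix.mul_sub,
          Matrix.mul_smul, ← Matrix.mul_assoc, mul_vecMulVec', hQw]
        have : vecMulVec (0 : Fin (n-1) → ℝ) w = 0 := by
          ext i j; simp [vecMulVec_apply]
        rw [this, Matrix.zero_mul, smul_zero, sub_zero]
  · rw [Matrix.transpose_mul, Matrix.transpose_transpose]
  · rw [Matrix.rank_self_mul_transpose, ← Matrix.rank_transpose_mul_self, hQtQ]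
    have hwn : w ⬝ᵥ w = (n : ℝ) := by
      simpa [dotProduct, hww] using hnjsum
    rw [← hwn]
    apply rank_aux
    intro h0
    exact hw' ⟨0, hc⟩ (congrFun h0 ⟨0, hc⟩)
end
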